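/- Let Ω ⊂ ℝⁿ be a bounded domain, let φ ∈ Φ_w(Ω) and define ψ(x,t) := φ(x,t) + t. If φ satisfies (A1), then ψ satisfies (A1), with constant depending only on the (A1) constant of φ and the (aInc)_1 constant of φ. -/

import Mathlib

open MeasureTheory Set Filter ENNReal NNReal Metric

noncomputable section

/-- `Ω` is a bounded domain (open, connected, bounded). -/
def BoundedDomain {n : ℕ} (Ω : Set (Fin n → ℝ)) : Prop :=
  IsOpen Ω ∧ IsConnected Ω ∧ Bornology.IsBounded Ω

/-- `φ : Ω × [0,∞) → [0,∞]` is a Φ-prefunction. -/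
def PhiPrefun {n : ℕ} (Ω : Set (Fin n → ℝ)) (φ : (Fin n → ℝ) → ℝ≥0 → ℝ≥0∞) : Prop :=
  (∀ t : ℝ≥0, Measurable fun x => φ x t) ∧
  (∀ x ∈ Ω, Monotone (φ x)) ∧
  (∀ x ∈ Ω, φ x 0 = 0) ∧
  (∀ x ∈ Ω, Tendsto (φ x) (nhdsWithin 0 (Ioi 0)) (nhds 0)) ∧
  (∀ x ∈ Ω, Tendsto (φ x) atTop (nhds ⊤))

/-- `(aInc)_p` with constant `L` for every `x ∈ Ω`:
`t ↦ φ(x,t)/t^p` is `L`-almost increasing on `(0,∞)`. -/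
def PhiAInc {n : ℕ} (Ω : Set (Fin n → ℝ)) (φ : (Fin n → ℝ) → ℝ≥0 → ℝ≥0∞)
    (p : ℝ) (L : ℝ≥0) : Prop :=
  ∀ x ∈ Ω, ∀ s t : ℝ≥0, 0 < s → s ≤ t →
    φ x s / (s : ℝ≥0∞) ^ p ≤ L * (φ x t / (t : ℝ≥0∞) ^ p)

/-- `φ` is a weak Φ-function on `Ω` with `(aInc)_1` constant `L`. -/
def IsWeakPhi {n : ℕ} (Ω : Set (Fin n → ℝ)) (φ : (Fin n → ℝ) → ℝ≥0 → ℝ≥0∞)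
    (L : ℝ≥0) : Prop :=
  PhiPrefun Ω φ ∧ 1 ≤ L ∧ PhiAInc Ω φ 1 L ∧
  ∀ x ∈ Ω, ∀ t : ℝ≥0, Tendsto (φ x) (nhdsWithin t (Iio t)) (nhds (φ x t))

/-- `(A0)` with constant `β`: `φ(x,β) ≤ 1 ≤ φ(x,1/β)` for a.e. `x ∈ Ω`. -/
def PhiA0 {n : ℕ} (Ω : Set (Fin n → ℝ)) (φ : (Fin n → ℝ) → ℝ≥0 → ℝ≥0∞)
    (β : ℝ≥0) : Prop :=
  ∀ᵐ x ∂(volume : Measure (Fin n → ℝ)), x ∈ Ω → φ x β ≤ 1 ∧ 1 ≤ φ x β⁻¹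

/-- `(aDec)_q` with constant `L`: `t ↦ φ(x,t)/t^q` is `L`-almost decreasing
on `(0,∞)` for a.e. `x ∈ Ω`. -/
def PhiADec {n : ℕ} (Ω : Set (Fin n → ℝ)) (φ : (Fin n → ℝ) → ℝ≥0 → ℝ≥0∞)
    (q : ℝ) (L : ℝ≥0) : Prop :=
  ∀ᵐ x ∂(volume : Measure (Fin n → ℝ)), x ∈ Ω → ∀ s t : ℝ≥0, 0 < s → s ≤ t →
    φ x t / (t : ℝ≥0∞) ^ q ≤ L * (φ x s / (s : ℝ≥0∞) ^ q)

/-- `(aDec)_q^∞` with constant `L`: `t ↦ (φ(x,t)+1)/t^q` is `L`-almost decreasing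
on `(0,∞)` for a.e. `x ∈ Ω`. -/
def PhiADecInf {n : ℕ} (Ω : Set (Fin n → ℝ)) (φ : (Fin n → ℝ) → ℝ≥0 → ℝ≥0∞)
    (q : ℝ) (L : ℝ≥0) : Prop :=
  ∀ᵐ x ∂(volume : Measure (Fin n → ℝ)), x ∈ Ω → ∀ s t : ℝ≥0, 0 < s → s ≤ t →
    (φ x t + 1) / (t : ℝ≥0∞) ^ q ≤ L * ((φ x s + 1) / (s : ℝ≥0∞) ^ q)

/-- The left-inverse `φ⁻¹(x,τ) = inf {t ≥ 0 : φ(x,t) ≥ τ}`. -/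
def phiInv {n : ℕ} (φ : (Fin n → ℝ) → ℝ≥0 → ℝ≥0∞) (x : Fin n → ℝ) (τ : ℝ≥0∞) : ℝ≥0∞ :=
  sInf ((fun t : ℝ≥0 => (t : ℝ≥0∞)) '' {t : ℝ≥0 | τ ≤ φ x t})

/-- `(A1)` with constant `β`: for every ball `B` and a.e. `x, y ∈ B ∩ Ω`,
`β φ⁻¹(x,τ) ≤ φ⁻¹(y,τ)` for all `τ ∈ [1, 1/|B|]`. -/
def PhiA1 {n : ℕ} (Ω : Set (Fin n → ℝ)) (φ : (Fin n → ℝ) → ℝ≥0 → ℝ≥0∞)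
    (β : ℝ≥0) : Prop :=
  ∀ (z : Fin n → ℝ) (ρ : ℝ), 0 < ρ →
    ∀ᵐ x ∂(volume : Measure (Fin n → ℝ)), ∀ᵐ y ∂(volume : Measure (Fin n → ℝ)),
      x ∈ Metric.ball z ρ ∩ Ω → y ∈ Metric.ball z ρ ∩ Ω →
      ∀ τ : ℝ≥0∞, 1 ≤ τ → τ ≤ (volume (Metric.ball z ρ))⁻¹ →
        (β : ℝ≥0∞) * phiInv φ x τ ≤ phiInv φ y τ

/-- `(A1-n)` with constant `β`: for every ball `B` and a.e. `x, y ∈ B ∩ Ω`,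
`φ(x,βt) ≤ φ(y,t)` for all `t ∈ [1, |B|^{-1/n}]`. -/
def PhiA1n {n : ℕ} (Ω : Set (Fin n → ℝ)) (φ : (Fin n → ℝ) → ℝ≥0 → ℝ≥0∞)
    (β : ℝ≥0) : Prop :=
  ∀ (z : Fin n → ℝ) (ρ : ℝ), 0 < ρ →
    ∀ᵐ x ∂(volume : Measure (Fin n → ℝ)), ∀ᵐ y ∂(volume : Measure (Fin n → ℝ)),
      x ∈ Metric.ball z ρ ∩ Ω → y ∈ Metric.ball z ρ ∩ Ω →
      ∀ t : ℝ≥0, 1 ≤ t → (t : ℝ≥0∞) ≤ (volume (Metric.ball z ρ)) ^ (-(1 / (n : ℝ))) →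
        φ x (β * t) ≤ φ y t

/-- Let `Ω ⊂ ℝⁿ` be a bounded domain, `φ ∈ Φ_w(Ω)` and
`ψ(x,t) := φ(x,t) + t`. If `φ` satisfies `(A1)`, then `ψ` satisfies `(A1)`, with
constant depending only on the `(A1)` constant of `φ` and the `(aInc)_1` constant
of `φ`. -/

theorem statement2 (β L : ℝ≥0) (hβ0 : 0 < β) (hβ1 : β < 1) (hL : 1 ≤ L) :
    ∃ β' : ℝ≥0, 0 < β' ∧ β' < 1 ∧
      ∀ (n : ℕ) (Ω : Set (Fin n → ℝ)) (φ : (Fin n → ℝ) → ℝ≥0 → ℝ≥0∞),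
        BoundedDomain Ω → IsWeakPhi Ω φ L → PhiA1 Ω φ β →
        PhiA1 Ω (fun x t => φ x t + (t : ℝ≥0∞)) β' := by
  have h2L : (1:ℝ≥0) ≤ 2 * L :=
    le_trans one_le_two (le_mul_of_le_of_one_le le_rfl hL)
  have h2L0 : (2 * L : ℝ≥0) ≠ 0 := (lt_of_lt_of_le one_pos h2L).ne'
  have h2Lpos : (0:ℝ≥0) < 2 * L := lt_of_lt_of_le one_pos h2L
  refine ⟨β / (2 * L), ?_, ?_, ?_⟩
  · exact div_pos hβ0 h2Lpos
  · rw [div_lt_one h2Lpos]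
    exact lt_of_lt_of_le hβ1 h2L
  intro n Ω φ hΩ hφ hA1 z ρ hρ
  obtain ⟨hpre, hL1, hainc, _⟩ := hφ
  filter_upwards [hA1 z ρ hρ] with x hx
  filter_upwards [hx] with y hxy
  intro hxB hyB τ hτ1 hτB
  have hτ0 : τ ≠ 0 := by intro h; rw [h] at hτ1; exact absurd hτ1 (by simp)
  have hball : 0 < volume (Metric.ball z ρ) := Metric.measure_ball_pos _ _ hρ
  have hτtop : τ ≠ ⊤ := by
    refine ne_top_of_le_ne_top ?_ hτB
    simp [ENNReal.inv_ne_top, hball.ne']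
  have hβab : (β : ℝ≥0∞) * phiInv φ x τ ≤ phiInv φ y τ := hxy hxB hyB τ hτ1 hτB
  set a := phiInv φ x τ with ha
  set b := phiInv φ y τ with hb
  -- upper bound for ψ⁻¹(x,τ)
  have up1 : phiInv (fun x t => φ x t + (t : ℝ≥0∞)) x τ ≤ a := by
    apply sInf_le_sInf
    apply Set.image_mono
    intro t ht
    simp only [Set.mem_setOf_eq] at ht ⊢
    exact le_trans ht le_self_add
  have up2 : phiInv (fun x t => φ x t + (t : ℝ≥0∞)) x τ ≤ τ := by
    apply sInf_le
    refine ⟨τ.toNNReal, ?_, ENNReal.coe_toNNReal hτtop⟩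
    simp only [Set.mem_setOf_eq]
    conv_lhs => rw [← ENNReal.coe_toNNReal hτtop]
    exact le_add_self
  -- lower bound for ψ⁻¹(y,τ)
  have low : min b τ / ((2 * L : ℝ≥0) : ℝ≥0∞)
      ≤ phiInv (fun x t => φ x t + (t : ℝ≥0∞)) y τ := by
    apply le_sInf
    rintro _ ⟨t, ht, rfl⟩
    simp only [Set.mem_setOf_eq] at ht
    rw [ENNReal.div_le_iff (ENNReal.coe_ne_zero.2 h2L0) ENNReal.coe_ne_top]
    by_cases hcase : τ ≤ 2 * (t : ℝ≥0∞)
    · calc min b τ ≤ τ := min_le_right _ _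
        _ ≤ 2 * (t : ℝ≥0∞) := hcase
        _ = (t : ℝ≥0∞) * 2 := mul_comm _ _
        _ ≤ (t : ℝ≥0∞) * ((2 * L : ℝ≥0) : ℝ≥0∞) := by
            gcongr
            exact_mod_cast le_mul_of_le_of_one_le le_rfl hL
    · push_neg at hcase
      have hyΩ : y ∈ Ω := hyB.2
      have htpos : 0 < t := by
        rcases eq_or_lt_of_le (zero_le : 0 ≤ t) with h | h
        · exfalso
          rw [← h] at ht
          rw [(hpre.2.2.1 y hyΩ)] at ht
          simp only [ENNReal.coe_zero, add_zero, le_zero_iff] at ht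
          exact hτ0 ht
        · exact h
      have ht0' : ((t : ℝ≥0∞)) ≠ 0 := by exact_mod_cast htpos.ne'
      have h2t0 : (2 * (t : ℝ≥0∞)) ≠ 0 := by simp [ht0']
      have h2ttop : (2 * (t : ℝ≥0∞)) ≠ ⊤ :=
        ENNReal.mul_ne_top (by norm_num) ENNReal.coe_ne_top
      -- τ ≤ 2 * φ y t
      have hφt : τ ≤ 2 * φ y t := by
        by_cases hmt : φ y t ≤ (t : ℝ≥0∞)
        · exfalso
          have : τ ≤ 2 * (t : ℝ≥0∞) := by
            calc τ ≤ φ y t + t := ht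
              _ ≤ (t : ℝ≥0∞) + t := by gcongr
              _ = 2 * t := (two_mul _).symm
          exact absurd this (not_le_of_gt hcase)
        · push_neg at hmt
          calc τ ≤ φ y t + t := ht
            _ ≤ φ y t + φ y t := add_le_add_right hmt.le _
            _ = 2 * φ y t := (two_mul _).symm
      -- aInc step: φ y (2Lt) ≥ τ
      have hinc := hainc y hyΩ t (2 * L * t) htpos
        (by calc t = 1 * t := (one_mul t).symm
              _ ≤ 2 * L * t := by gcongr)
      simp only [ENNReal.rpow_one] at hinc
      have hL0 : (L : ℝ≥0∞) ≠ 0 := by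
        simp only [ne_eq, ENNReal.coe_eq_zero]
        exact (lt_of_lt_of_le one_pos hL).ne'
      have key : τ ≤ φ y (2 * L * t) := by
        have h1 : τ / (2 * (t : ℝ≥0∞)) ≤ φ y t / (t : ℝ≥0∞) := by
          have e : τ / (2 * (t : ℝ≥0∞)) = (τ / 2) / (t : ℝ≥0∞) := by
            rw [div_eq_mul_inv, ENNReal.mul_inv (Or.inl (by norm_num)) (Or.inl (by norm_num)),
              ← mul_assoc, ← div_eq_mul_inv, ← div_eq_mul_inv]
          rw [e]
          gcongr
          rw [ENNReal.div_le_iff (by norm_num) (by norm_num), mul_comm]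
          exact hφt
        have h3 : (L : ℝ≥0∞) * (φ y (2 * L * t) / ((2 * L * t : ℝ≥0) : ℝ≥0∞))
            = φ y (2 * L * t) / (2 * (t : ℝ≥0∞)) := by
          push_cast
          rw [show ((2:ℝ≥0∞) * L * t) = (L : ℝ≥0∞) * (2 * t) by ring,
            ENNReal.div_eq_inv_mul,
            ENNReal.mul_inv (Or.inl hL0) (Or.inl ENNReal.coe_ne_top),
            ENNReal.div_eq_inv_mul, ← mul_assoc, ← mul_assoc,
            ENNReal.mul_inv_cancel hL0 ENNReal.coe_ne_top, one_mul]
        have h2 : τ / (2 * (t : ℝ≥0∞)) ≤ φ y (2 * L * t) / (2 * (t : ℝ≥0∞)) := by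
          rw [← h3]; exact le_trans h1 hinc
        calc τ = τ / (2 * (t : ℝ≥0∞)) * (2 * (t : ℝ≥0∞)) :=
              (ENNReal.div_mul_cancel h2t0 h2ttop).symm
          _ ≤ φ y (2 * L * t) / (2 * (t : ℝ≥0∞)) * (2 * (t : ℝ≥0∞)) := by gcongr
          _ = φ y (2 * L * t) := ENNReal.div_mul_cancel h2t0 h2ttop
      have hble : b ≤ ((2 * L * t : ℝ≥0) : ℝ≥0∞) := sInf_le ⟨2 * L * t, key, rfl⟩
      calc min b τ ≤ b := min_le_left _ _
        _ ≤ ((2 * L * t : ℝ≥0) : ℝ≥0∞) := hble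
        _ = (t : ℝ≥0∞) * ((2 * L : ℝ≥0) : ℝ≥0∞) := by push_cast; ring
  -- main chain
  have hβ'coe : ((β / (2 * L) : ℝ≥0) : ℝ≥0∞) = (β : ℝ≥0∞) / ((2 * L : ℝ≥0) : ℝ≥0∞) :=
    ENNReal.coe_div h2L0
  calc ((β / (2 * L) : ℝ≥0) : ℝ≥0∞) * phiInv (fun x t => φ x t + (t : ℝ≥0∞)) x τ
      ≤ ((β / (2 * L) : ℝ≥0) : ℝ≥0∞) * min a τ := by
        gcongr
        exact le_min up1 up2
    _ = (β : ℝ≥0∞) * min a τ / ((2 * L : ℝ≥0) : ℝ≥0∞) := by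
        rw [hβ'coe, div_eq_mul_inv, mul_right_comm, ← div_eq_mul_inv]
    _ ≤ min b τ / ((2 * L : ℝ≥0) : ℝ≥0∞) := by
        gcongr
        apply le_min
        · exact le_trans (by gcongr; exact min_le_left _ _) hβab
        · calc (β : ℝ≥0∞) * min a τ
              ≤ 1 * τ := mul_le_mul' (by exact_mod_cast hβ1.le) (min_le_right _ _)
            _ = τ := one_mul τ
    _ ≤ phiInv (fun x t => φ x t + (t : ℝ≥0∞)) y τ := low
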